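/- Fix a Lagrangian subspace λ of H. For each bounded selfadjoint operator A on λ set G_λ(A) = {x + J(A x) : x ∈ λ}. Then each G_λ(A) is a Lagrangian subspace of H with G_λ(A) + λ^⊥ = H; the map A ↦ G_λ(A) is a bijection from the space of bounded selfadjoint operators on λ onto the set of Lagrangian subspaces μ of H with μ + λ^⊥ = H; and the map A ↦ P_{G_λ(A)} is a homeomorphism from the space of bounded selfadjoint operators on λ (operator-norm topology) onto the set of orthogonal projections of H whose range is a Lagrangian subspace μ with μ + λ^⊥ = H (operator-norm topology). -/

import Mathlib

open scoped RealInnerProductSpace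

set_option linter.unusedSectionVars false
set_option maxHeartbeats 1000000
set_option synthInstance.maxHeartbeats 1000000

/-- The annihilator of a set `μ` with respect to the symplectic form `ω(x, y) = ⟪J x, y⟫`. -/
def omegaAnn {H : Type*} [NormedAddCommGroup H] [InnerProductSpace ℝ H]
    (J : H →L[ℝ] H) (μ : Set H) : Set H :=
  {x : H | ∀ y ∈ μ, ⟪J x, y⟫ = 0}

/-- The graph `G_λ(A) = {x + J (A x) : x ∈ λ}` of a bounded operator `A` on `λ`. -/
def graphSet {H : Type*} [NormedAddCommGroup H] [InnerProductSpace ℝ H]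
    (J : H →L[ℝ] H) (l : Submodule ℝ H) (A : ↥l →L[ℝ] ↥l) : Set H :=
  {y : H | ∃ x : ↥l, y = (x : H) + J (A x)}

section Aux

theorem ContinuousAt.clm_comp' {𝕜 : Type*} [NontriviallyNormedField 𝕜]
    {E F G X : Type*} [NormedAddCommGroup E] [NormedSpace 𝕜 E] [NormedAddCommGroup F]
    [NormedSpace 𝕜 F] [NormedAddCommGroup G] [NormedSpace 𝕜 G] [TopologicalSpace X]
    {g : X → F →L[𝕜] G} {f : X → E →L[𝕜] F} {x : X}
    (hg : ContinuousAt g x) (hf : ContinuousAt f x) :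
    ContinuousAt (fun y => (g y).comp (f y)) x :=
  ContinuousAt.comp (f := fun y => (g y, f y))
    ((continuous_fst.clm_comp continuous_snd).continuousAt) (hg.prodMk hf)

variable {H : Type*} [NormedAddCommGroup H] [InnerProductSpace ℝ H]

theorem omegaAnn_isClosed (J : H →L[ℝ] H) (μ : Set H) : IsClosed (omegaAnn J μ) := by
  have h : omegaAnn J μ = ⋂ y ∈ μ, {x : H | ⟪J x, y⟫ = 0} := by
    ext x; simp [omegaAnn]
  rw [h]
  exact isClosed_biInter fun y _ =>
    isClosed_eq (J.continuous.inner continuous_const) continuous_const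

/-- The subspace structure on a set satisfying `omegaAnn J μ = μ`. -/
def lagSub (J : H →L[ℝ] H) (μ : Set H) (hμ : omegaAnn J μ = μ) : Submodule ℝ H where
  carrier := μ
  add_mem' := by
    intro a b ha hb
    have ha' : a ∈ omegaAnn J μ := by rw [hμ]; exact ha
    have hb' : b ∈ omegaAnn J μ := by rw [hμ]; exact hb
    have h : a + b ∈ omegaAnn J μ := fun y hy => by
      rw [map_add, inner_add_left, ha' y hy, hb' y hy, add_zero]
    rwa [hμ] at h
  zero_mem' := by
    have h : (0 : H) ∈ omegaAnn J μ := fun y hy => by rw [map_zero, inner_zero_left]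
    rwa [hμ] at h
  smul_mem' := by
    intro c a ha
    have ha' : a ∈ omegaAnn J μ := by rw [hμ]; exact ha
    have h : c • a ∈ omegaAnn J μ := fun y hy => by
      rw [map_smul, inner_smul_left, ha' y hy]; simp
    rwa [hμ] at h

theorem coercive_isUnit {K : Type*} [NormedAddCommGroup K] [InnerProductSpace ℝ K]
    [CompleteSpace K] (T : K →L[ℝ] K) (hT : ∀ x, ‖x‖ ^ 2 ≤ ⟪T x, x⟫) : IsUnit T := by
  have hnorm : ∀ x, ‖x‖ ≤ 1 * ‖T x‖ := by
    intro x
    have h1 := hT x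
    have h2 : ⟪T x, x⟫ ≤ ‖T x‖ * ‖x‖ := real_inner_le_norm _ _
    nlinarith [norm_nonneg x, norm_nonneg (T x)]
  have hanti : AntilipschitzWith 1 T := T.antilipschitz_of_bound (by simpa using hnorm)
  have hinj : T.ker = ⊥ := LinearMap.ker_eq_bot.2 hanti.injective
  have hcl : IsClosed ((T.range : Submodule ℝ K) : Set K) :=
    hanti.isClosed_range T.uniformContinuous
  haveI : CompleteSpace (T.range) := hcl.completeSpace_coe
  have horth : (T.range)ᗮ = ⊥ := by
    rw [Submodule.eq_bot_iff]
    intro y hy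
    have h0 : ⟪T y, y⟫ = 0 :=
      (Submodule.mem_orthogonal _ y).1 hy (T y) (LinearMap.mem_range_self (T : K →ₗ[ℝ] K) y)
    have h1 := hT y
    rw [h0] at h1
    have : ‖y‖ = 0 := by nlinarith [norm_nonneg y]
    exact norm_eq_zero.1 this
  have hrange : T.range = ⊤ := by
    rwa [Submodule.orthogonal_eq_bot_iff] at horth
  refine ⟨(ContinuousLinearEquiv.unitsEquiv ℝ K).symm
    (ContinuousLinearEquiv.ofBijective T hinj hrange), ?_⟩
  ext x
  rfl

theorem lag_isUnit {K : Type*} [NormedAddCommGroup K] [InnerProductSpace ℝ K]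
    [CompleteSpace K] (A : K →L[ℝ] K) (hA : ∀ x y : K, ⟪A x, y⟫ = ⟪x, A y⟫) :
    IsUnit (1 + A * A) := by
  apply coercive_isUnit
  intro x
  have h1 : ⟪(1 + A * A) x, x⟫ = ⟪x, x⟫ + ⟪A x, A x⟫ := by
    rw [ContinuousLinearMap.add_apply, ContinuousLinearMap.one_apply,
      ContinuousLinearMap.mul_apply, inner_add_left, hA (A x) x]
  rw [h1, real_inner_self_eq_norm_sq]
  nlinarith [real_inner_self_nonneg (x := A x)]

end Aux

section Lag

variable {H : Type*} [NormedAddCommGroup H] [InnerProductSpace ℝ H] [CompleteSpace H]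
variable (J : H →L[ℝ] H) (l : Submodule ℝ H)

noncomputable def lagPi1 [CompleteSpace ↥l] : H →L[ℝ] ↥l := Submodule.orthogonalProjectionOnto l

noncomputable def lagPi2 [CompleteSpace ↥l] : H →L[ℝ] ↥l :=
  (Submodule.orthogonalProjectionOnto l).comp (-J)

noncomputable def lagGamma (A : ↥l →L[ℝ] ↥l) : ↥l →L[ℝ] H :=
  l.subtypeL + (J.comp l.subtypeL).comp A

noncomputable def lagRho [CompleteSpace ↥l] (A : ↥l →L[ℝ] ↥l) : H →L[ℝ] ↥l :=
  lagPi1 l + A.comp (lagPi2 J l)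

noncomputable def lagProj [CompleteSpace ↥l] (A : ↥l →L[ℝ] ↥l) : H →L[ℝ] H :=
  ((lagGamma J l A).comp (Ring.inverse (1 + A * A))).comp (lagRho J l A)

noncomputable def lagPsi [CompleteSpace ↥l] (B : H →L[ℝ] H) : ↥l →L[ℝ] ↥l :=
  ((lagPi2 J l).comp (B.comp l.subtypeL)) *
    Ring.inverse ((lagPi1 l).comp (B.comp l.subtypeL))

variable {J l}

theorem omega_vanish (hl : omegaAnn J (l : Set H) = (l : Set H)) {x y : H}
    (hx : x ∈ l) (hy : y ∈ l) : ⟪J x, y⟫ = 0 := by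
  have hx' : x ∈ omegaAnn J (l : Set H) := by rw [hl]; exact hx
  exact hx' y hy

theorem J_mem_orth (hl : omegaAnn J (l : Set H) = (l : Set H)) {x : H} (hx : x ∈ l) :
    J x ∈ lᗮ :=
  (Submodule.mem_orthogonal l (J x)).2 fun y hy => by
    rw [real_inner_comm]; exact omega_vanish hl hx hy

theorem negJ_mem (hJ2 : ∀ x : H, J (J x) = -x)
    (hl : omegaAnn J (l : Set H) = (l : Set H)) {x : H} (hx : x ∈ lᗮ) : -J x ∈ l := by
  have h : -J x ∈ omegaAnn J (l : Set H) := by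
    intro y hy
    rw [map_neg, hJ2, neg_neg, real_inner_comm]
    exact (Submodule.mem_orthogonal l x).1 hx y hy
  rwa [hl] at h

theorem lag_decomp [CompleteSpace ↥l] (hJ2 : ∀ x : H, J (J x) = -x)
    (hl : omegaAnn J (l : Set H) = (l : Set H)) (z : H) :
    z = (lagPi1 l z : H) + J (lagPi2 J l z : H) := by
  have hz := (by rw [← Submodule.starProjection_apply, ← Submodule.starProjection_apply]; exact Submodule.starProjection_add_starProjection_orthogonal z :
    ((Submodule.orthogonalProjectionOnto l z : H) + (Submodule.orthogonalProjectionOnto lᗮ z : H)) = z).symm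
  set a : H := (Submodule.orthogonalProjectionOnto l z : H) with ha
  set b : H := (Submodule.orthogonalProjectionOnto lᗮ z : H) with hb
  have hbl : -J b ∈ l := negJ_mem hJ2 hl (Submodule.coe_mem _)
  have key : ((Submodule.orthogonalProjectionOnto l (-(J z))) : H) = -J b := by
    have hsplit : -(J z) = -(J a) + -J b := by
      conv_lhs => rw [hz]
      rw [map_add, neg_add]
    rw [hsplit, map_add]
    have h1 : (Submodule.orthogonalProjectionOnto l (-(J a)) : ↥l) = 0 :=
      Submodule.orthogonalProjectionOnto_apply_of_mem_orthogonal
        (Submodule.neg_mem _ (J_mem_orth hl (Submodule.coe_mem _)))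
    rw [h1, Submodule.coe_add, Submodule.coe_zero, zero_add]
    rw [← Submodule.starProjection_apply]; exact Submodule.starProjection_eq_self_iff.2 hbl
  have h2 : J ((lagPi2 J l z : ↥l) : H) = b := by
    have : ((lagPi2 J l z : ↥l) : H) = (Submodule.orthogonalProjectionOnto l (-(J z)) : H) := by
      simp [lagPi2]
    rw [this, key, map_neg, hJ2, neg_neg]
  rw [h2]
  exact hz

theorem lag_pi1_add [CompleteSpace ↥l] (hl : omegaAnn J (l : Set H) = (l : Set H))
    (x w : ↥l) : lagPi1 l ((x : H) + J w) = x := by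
  have : lagPi1 l ((x : H) + J w) =
      Submodule.orthogonalProjectionOnto l (x : H) + Submodule.orthogonalProjectionOnto l (J (w : H)) := by
    simp [lagPi1]
  rw [this, Submodule.orthogonalProjectionOnto_mem_subspace_eq_self,
    Submodule.orthogonalProjectionOnto_apply_of_mem_orthogonal
      (J_mem_orth hl (Submodule.coe_mem w)), add_zero]

theorem lag_pi2_add [CompleteSpace ↥l] (hJ2 : ∀ x : H, J (J x) = -x)
    (hl : omegaAnn J (l : Set H) = (l : Set H)) (x w : ↥l) :
    lagPi2 J l ((x : H) + J w) = w := by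
  have h0 : -(J ((x : H) + J (w : H))) = -(J (x : H)) + (w : H) := by
    rw [map_add, hJ2, neg_add, neg_neg]
  have : lagPi2 J l ((x : H) + J w) = Submodule.orthogonalProjectionOnto l (-(J ((x : H) + J w))) := by
    simp [lagPi2]
  rw [this, h0, map_add, Submodule.orthogonalProjectionOnto_apply_of_mem_orthogonal
    (Submodule.neg_mem _ (J_mem_orth hl (Submodule.coe_mem x))),
    Submodule.orthogonalProjectionOnto_mem_subspace_eq_self, zero_add]

theorem lag_inner_pair (hJorth : ∀ x y : H, ⟪J x, J y⟫ = ⟪x, y⟫)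
    (hl : omegaAnn J (l : Set H) = (l : Set H)) (x w y v : ↥l) :
    ⟪(x : H) + J w, (y : H) + J v⟫ = ⟪(x : H), (y : H)⟫ + ⟪(w : H), (v : H)⟫ := by
  rw [inner_add_left, inner_add_right, inner_add_right, hJorth]
  have h1 : ⟪(x : H), J (v : H)⟫ = 0 := by
    rw [real_inner_comm]; exact omega_vanish hl (Submodule.coe_mem v) (Submodule.coe_mem x)
  have h2 : ⟪J (w : H), (y : H)⟫ = 0 :=
    omega_vanish hl (Submodule.coe_mem w) (Submodule.coe_mem y)
  rw [h1, h2]; ring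

theorem lag_omega_pair (hJ2 : ∀ x : H, J (J x) = -x)
    (hJorth : ∀ x y : H, ⟪J x, J y⟫ = ⟪x, y⟫)
    (hl : omegaAnn J (l : Set H) = (l : Set H)) (x w y v : ↥l) :
    ⟪J ((x : H) + J w), (y : H) + J v⟫ = ⟪(x : H), (v : H)⟫ - ⟪(w : H), (y : H)⟫ := by
  rw [map_add, hJ2, inner_add_left, inner_add_right, inner_add_right, hJorth]
  have h1 : ⟪J (x : H), (y : H)⟫ = 0 :=
    omega_vanish hl (Submodule.coe_mem x) (Submodule.coe_mem y)
  have h2 : ⟪-(w : H), J (v : H)⟫ = 0 := by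
    rw [inner_neg_left, real_inner_comm]
    rw [omega_vanish hl (Submodule.coe_mem v) (Submodule.coe_mem w)]
    ring
  rw [h1, h2, inner_neg_left]; ring


section Graph

variable [CompleteSpace ↥l]
variable (hJ2 : ∀ x : H, J (J x) = -x) (hJorth : ∀ x y : H, ⟪J x, J y⟫ = ⟪x, y⟫)
variable (hl : omegaAnn J (l : Set H) = (l : Set H))

include hJ2 hJorth hl in
theorem graph_lagrangian {A : ↥l →L[ℝ] ↥l} (hA : ∀ x y : ↥l, ⟪A x, y⟫ = ⟪x, A y⟫) :
    omegaAnn J (graphSet J l A) = graphSet J l A := by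
  ext z
  constructor
  · intro hz
    have hdz := lag_decomp hJ2 hl z
    set u : ↥l := lagPi1 l z with hu
    set w : ↥l := lagPi2 J l z with hw
    have key : ∀ y : ↥l, ⟪((A u - w : ↥l) : H), (y : H)⟫ = 0 := by
      intro y
      have h0 : ⟪J z, (y : H) + J (A y)⟫ = 0 := hz ((y : H) + J (A y)) ⟨y, rfl⟩
      rw [hdz, lag_omega_pair hJ2 hJorth hl] at h0
      have h1 : ⟪(u : H), ((A y : ↥l) : H)⟫ = ⟪((A u : ↥l) : H), (y : H)⟫ := by
        have h := hA u y
        rw [Submodule.coe_inner, Submodule.coe_inner] at h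
        exact h.symm
      rw [Submodule.coe_sub, inner_sub_left, ← h1]
      linarith
    have hAuw : A u = w := by
      have h := key (A u - w)
      rw [← Submodule.coe_inner] at h
      exact sub_eq_zero.1 (inner_self_eq_zero.1 h)
    exact ⟨u, by rw [hdz, hAuw]⟩
  · rintro ⟨x, rfl⟩ y ⟨c, rfl⟩
    rw [lag_omega_pair hJ2 hJorth hl]
    have h := hA x c
    rw [Submodule.coe_inner, Submodule.coe_inner] at h
    linarith

include hJ2 hl in
theorem graph_transversal (A : ↥l →L[ℝ] ↥l) :
    ∀ z : H, ∃ u ∈ graphSet J l A, ∃ v ∈ (lᗮ : Set H), z = u + v := by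
  intro z
  refine ⟨(lagPi1 l z : H) + J (A (lagPi1 l z)), ⟨lagPi1 l z, rfl⟩,
    J ((lagPi2 J l z : H) - (A (lagPi1 l z) : H)), ?_, ?_⟩
  · exact J_mem_orth hl (Submodule.sub_mem l (Submodule.coe_mem _) (Submodule.coe_mem _))
  · rw [map_sub]
    have := lag_decomp hJ2 hl z
    conv_lhs => rw [this]
    abel

include hJ2 hl in
theorem graph_inj {A B : ↥l →L[ℝ] ↥l} (h : graphSet J l A = graphSet J l B) : A = B := by
  ext x
  have hx : ((x : H) + J (A x)) ∈ graphSet J l B := h ▸ ⟨x, rfl⟩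
  obtain ⟨y, hy⟩ := hx
  have h1 : lagPi1 l ((x : H) + J (A x)) = lagPi1 l ((y : H) + J (B y)) := by rw [← hy]
  rw [lag_pi1_add hl, lag_pi1_add hl] at h1
  have h2 : lagPi2 J l ((x : H) + J (A x)) = lagPi2 J l ((y : H) + J (B y)) := by rw [← hy]
  rw [lag_pi2_add hJ2 hl, lag_pi2_add hJ2 hl] at h2
  rw [h2, h1]

include hJ2 hJorth hl in
theorem graph_surj (μ : Set H) (hμ : omegaAnn J μ = μ)
    (htr : ∀ z : H, ∃ u ∈ μ, ∃ v ∈ (lᗮ : Set H), z = u + v) :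
    ∃ A : ↥l →L[ℝ] ↥l, (∀ x y : ↥l, ⟪A x, y⟫ = ⟪x, A y⟫) ∧ graphSet J l A = μ := by
  set M : Submodule ℝ H := lagSub J μ hμ with hM
  have hMμ : (M : Set H) = μ := rfl
  have hMclosed : IsClosed (M : Set H) := by
    rw [hMμ, ← hμ]; exact omegaAnn_isClosed J μ
  haveI : CompleteSpace ↥M := hMclosed.completeSpace_coe
  have hdisj : ∀ z : H, z ∈ μ → z ∈ lᗮ → z = 0 := by
    intro z hz1 hz2
    have hJz : ∀ w : H, ⟪J z, w⟫ = 0 := by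
      intro w
      obtain ⟨u, hu, v, hv, rfl⟩ := htr w
      have t1 : ⟪J z, u⟫ = 0 := by
        have hz1' : z ∈ omegaAnn J μ := by rw [hμ]; exact hz1
        exact hz1' u hu
      have t2 : ⟪J z, v⟫ = 0 := by
        have hbv : -J v ∈ l := negJ_mem hJ2 hl hv
        calc ⟪J z, v⟫ = ⟪J z, J (-J v)⟫ := by rw [map_neg, hJ2, neg_neg]
          _ = ⟪z, -J v⟫ := hJorth _ _
          _ = 0 := by
              rw [real_inner_comm]
              exact (Submodule.mem_orthogonal l z).1 hz2 (-J v) hbv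
      rw [inner_add_right, t1, t2, add_zero]
    have h := hJz (J z)
    rw [hJorth] at h
    exact inner_self_eq_zero.1 h
  set T : ↥M →L[ℝ] ↥l := (lagPi1 l).comp M.subtypeL with hT
  have hTapp : ∀ m : ↥M, T m = lagPi1 l (m : H) := fun m => rfl
  have hker : T.ker = ⊥ := by
    rw [Submodule.eq_bot_iff]
    intro m hm
    rw [LinearMap.mem_ker, ContinuousLinearMap.coe_coe] at hm
    have hdm := lag_decomp hJ2 hl (m : H)
    rw [← hTapp, hm] at hdm
    simp only [Submodule.coe_zero, ZeroMemClass.coe_zero, zero_add] at hdm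
    have hmem2 : (m : H) ∈ lᗮ := by rw [hdm]; exact J_mem_orth hl (Submodule.coe_mem _)
    have h0 : (m : H) = 0 := hdisj _ m.2 hmem2
    exact Subtype.ext h0
  have hrange : T.range = ⊤ := by
    rw [LinearMap.range_eq_top]
    intro x
    obtain ⟨u, hu, v, hv, hx⟩ := htr (x : H)
    refine ⟨⟨u, hu⟩, ?_⟩
    have huv : u = (x : H) - v := by rw [hx]; abel
    have hpi : lagPi1 l u = x := by
      have : lagPi1 l u = Submodule.orthogonalProjectionOnto l ((x : H) - v) := by rw [huv]; rfl
      rw [this, map_sub, Submodule.orthogonalProjectionOnto_mem_subspace_eq_self,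
        Submodule.orthogonalProjectionOnto_apply_of_mem_orthogonal hv, sub_zero]
    exact hpi
  set e := ContinuousLinearEquiv.ofBijective T hker hrange with he
  have heapp : ∀ m : ↥M, e m = T m := fun m => rfl
  set A : ↥l →L[ℝ] ↥l := (lagPi2 J l).comp (M.subtypeL.comp (e.symm : ↥l →L[ℝ] ↥M)) with hA
  have hAapp : ∀ x : ↥l, A x = lagPi2 J l ((e.symm x : ↥M) : H) := fun x => rfl
  have hrep : ∀ x : ↥l, ((e.symm x : ↥M) : H) = (x : H) + J (A x) := by
    intro x
    have hd := lag_decomp hJ2 hl ((e.symm x : ↥M) : H)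
    have h1 : lagPi1 l ((e.symm x : ↥M) : H) = x := by
      rw [← hTapp, ← heapp, e.apply_symm_apply]
    rw [h1, ← hAapp] at hd
    exact hd
  refine ⟨A, ?_, ?_⟩
  · intro x y
    have hx : ((x : H) + J (A x)) ∈ μ := by rw [← hrep]; exact (e.symm x).2
    have hy : ((y : H) + J (A y)) ∈ μ := by rw [← hrep]; exact (e.symm y).2
    have h0 : ⟪J ((x : H) + J (A x)), (y : H) + J (A y)⟫ = 0 := by
      have hx' : ((x : H) + J (A x)) ∈ omegaAnn J μ := by rw [hμ]; exact hx
      exact hx' _ hy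
    rw [lag_omega_pair hJ2 hJorth hl] at h0
    rw [Submodule.coe_inner, Submodule.coe_inner]
    linarith
  · ext z
    constructor
    · rintro ⟨x, rfl⟩
      rw [← hrep]
      exact (e.symm x).2
    · intro hz
      refine ⟨T ⟨z, hz⟩, ?_⟩
      have h1 : e.symm (T ⟨z, hz⟩) = ⟨z, hz⟩ := by
        rw [← heapp, e.symm_apply_apply]
      have h2 := hrep (T ⟨z, hz⟩)
      rw [h1] at h2
      exact h2

end Graph


section Proj

variable [CompleteSpace ↥l]
variable (hJ2 : ∀ x : H, J (J x) = -x) (hJorth : ∀ x y : H, ⟪J x, J y⟫ = ⟪x, y⟫)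
variable (hl : omegaAnn J (l : Set H) = (l : Set H))

theorem lagProj_apply (A : ↥l →L[ℝ] ↥l) (z : H) :
    lagProj J l A z = ((Ring.inverse (1 + A * A)) (lagRho J l A z) : H) +
      J (A ((Ring.inverse (1 + A * A)) (lagRho J l A z))) := rfl

include hJ2 hl in
theorem lag_rho_add (A : ↥l →L[ℝ] ↥l) (x w : ↥l) :
    lagRho J l A ((x : H) + J w) = x + A w := by
  have : lagRho J l A ((x : H) + J w) =
      lagPi1 l ((x : H) + J w) + A (lagPi2 J l ((x : H) + J w)) := rfl
  rw [this, lag_pi1_add hl, lag_pi2_add hJ2 hl]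

include hJ2 hl in
theorem lag_rho_coe (A : ↥l →L[ℝ] ↥l) (x : ↥l) : lagRho J l A ((x : H)) = x := by
  have h : ((x : H)) = (x : H) + J ((0 : ↥l) : H) := by simp
  rw [h, lag_rho_add hJ2 hl, map_zero, add_zero]

include hJ2 hl in
theorem lagProj_graph {A : ↥l →L[ℝ] ↥l} (hA : ∀ x y : ↥l, ⟪A x, y⟫ = ⟪x, A y⟫) (x : ↥l) :
    lagProj J l A ((x : H) + J (A x)) = (x : H) + J (A x) := by
  have hU := lag_isUnit A hA
  have hρ : lagRho J l A ((x : H) + J (A x)) = (1 + A * A) x := by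
    rw [lag_rho_add hJ2 hl]
    rfl
  have hinv : Ring.inverse (1 + A * A) ((1 + A * A) x) = x := by
    rw [← ContinuousLinearMap.mul_apply, Ring.inverse_mul_cancel _ hU,
      ContinuousLinearMap.one_apply]
  rw [lagProj_apply, hρ, hinv]

include hJ2 hl in
theorem lagProj_range {A : ↥l →L[ℝ] ↥l} (hA : ∀ x y : ↥l, ⟪A x, y⟫ = ⟪x, A y⟫) :
    Set.range ⇑(lagProj J l A) = graphSet J l A := by
  apply Set.Subset.antisymm
  · rintro _ ⟨z, rfl⟩
    exact ⟨_, lagProj_apply A z⟩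
  · rintro _ ⟨x, rfl⟩
    exact ⟨_, lagProj_graph hJ2 hl hA x⟩

include hJ2 hl in
theorem lagProj_idem {A : ↥l →L[ℝ] ↥l} (hA : ∀ x y : ↥l, ⟪A x, y⟫ = ⟪x, A y⟫) :
    (lagProj J l A).comp (lagProj J l A) = lagProj J l A := by
  ext z
  rw [ContinuousLinearMap.comp_apply]
  obtain ⟨x, hx⟩ : ∃ x : ↥l, lagProj J l A z = (x : H) + J (A x) := ⟨_, lagProj_apply A z⟩
  rw [hx, lagProj_graph hJ2 hl hA]

include hJ2 hJorth hl in
theorem lagProj_sa {A : ↥l →L[ℝ] ↥l} (hA : ∀ x y : ↥l, ⟪A x, y⟫ = ⟪x, A y⟫) :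
    ∀ z z' : H, ⟪lagProj J l A z, z'⟫ = ⟪z, lagProj J l A z'⟫ := by
  have hU := lag_isUnit A hA
  set C : ↥l →L[ℝ] ↥l := Ring.inverse (1 + A * A) with hC
  have hsaB : ∀ a b : ↥l, ⟪(1 + A * A) a, b⟫ = ⟪a, (1 + A * A) b⟫ := by
    intro a b
    have e1 : (1 + A * A) a = a + A (A a) := rfl
    have e2 : (1 + A * A) b = b + A (A b) := rfl
    rw [e1, e2, inner_add_left, inner_add_right, hA (A a) b, hA a (A b)]
  have hsaC : ∀ a b : ↥l, ⟪C a, b⟫ = ⟪a, C b⟫ := by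
    intro a b
    have hb : b = (1 + A * A) (C b) := by
      rw [← ContinuousLinearMap.mul_apply, Ring.mul_inverse_cancel _ hU,
        ContinuousLinearMap.one_apply]
    have ha : (1 + A * A) (C a) = a := by
      rw [← ContinuousLinearMap.mul_apply, Ring.mul_inverse_cancel _ hU,
        ContinuousLinearMap.one_apply]
    conv_lhs => rw [hb]
    rw [← hsaB (C a) (C b), ha]
  have expand : ∀ (u : ↥l) (w' : H),
      ⟪(u : H) + J (A u), w'⟫ = ⟪u, lagRho J l A w'⟫ := by
    intro u w'
    conv_lhs => rw [lag_decomp hJ2 hl w']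
    rw [lag_inner_pair hJorth hl]
    have hr : lagRho J l A w' = lagPi1 l w' + A (lagPi2 J l w') := rfl
    rw [hr, inner_add_right, ← hA u (lagPi2 J l w'), Submodule.coe_inner,
      Submodule.coe_inner]
  intro z z'
  have h1 : ⟪lagProj J l A z, z'⟫ = ⟪C (lagRho J l A z), lagRho J l A z'⟫ := by
    rw [lagProj_apply]
    exact expand _ _
  have h2 : ⟪z, lagProj J l A z'⟫ = ⟪C (lagRho J l A z'), lagRho J l A z⟫ := by
    rw [real_inner_comm, lagProj_apply]
    exact expand _ _
  rw [h1, h2, hsaC, real_inner_comm]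

include hJ2 hl in
theorem lag_DE {A : ↥l →L[ℝ] ↥l} (hA : ∀ x y : ↥l, ⟪A x, y⟫ = ⟪x, A y⟫) :
    (lagPi1 l).comp ((lagProj J l A).comp l.subtypeL) = Ring.inverse (1 + A * A) ∧
    (lagPi2 J l).comp ((lagProj J l A).comp l.subtypeL) = A * Ring.inverse (1 + A * A) := by
  have key : ∀ x : ↥l, lagProj J l A ((x : H)) =
      ((Ring.inverse (1 + A * A)) x : H) + J (A ((Ring.inverse (1 + A * A)) x)) := by
    intro x
    rw [lagProj_apply, lag_rho_coe hJ2 hl]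
  constructor
  · ext x
    have : ((lagPi1 l).comp ((lagProj J l A).comp l.subtypeL)) x =
        lagPi1 l (lagProj J l A ((x : H))) := rfl
    rw [this, key, lag_pi1_add hl]
  · ext x
    have : ((lagPi2 J l).comp ((lagProj J l A).comp l.subtypeL)) x =
        lagPi2 J l (lagProj J l A ((x : H))) := rfl
    rw [this, key, lag_pi2_add hJ2 hl]
    rfl

include hJ2 hl in
theorem lag_psi_phi {A : ↥l →L[ℝ] ↥l} (hA : ∀ x y : ↥l, ⟪A x, y⟫ = ⟪x, A y⟫) :
    lagPsi J l (lagProj J l A) = A := by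
  obtain ⟨hD, hE⟩ := lag_DE hJ2 hl hA
  have hU := lag_isUnit A hA
  rw [lagPsi, hD, hE]
  rw [← IsUnit.unit_spec hU, Ring.inverse_unit, Ring.inverse_unit]
  rw [inv_inv]
  exact Units.inv_mul_cancel_right A hU.unit

end Proj

theorem proj_unique {P Q : H →L[ℝ] H}
    (hPsa : ∀ x y : H, ⟪P x, y⟫ = ⟪x, P y⟫) (hQsa : ∀ x y : H, ⟪Q x, y⟫ = ⟪x, Q y⟫)
    (hP2 : P.comp P = P) (hQ2 : Q.comp Q = Q)
    (h : Set.range ⇑P = Set.range ⇑Q) : P = Q := by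
  have hfixP : ∀ m ∈ Set.range ⇑P, P m = m := by
    rintro _ ⟨k, rfl⟩
    rw [← ContinuousLinearMap.comp_apply, hP2]
  have hfixQ : ∀ m ∈ Set.range ⇑Q, Q m = m := by
    rintro _ ⟨k, rfl⟩
    rw [← ContinuousLinearMap.comp_apply, hQ2]
  have key : ∀ z m, m ∈ Set.range ⇑P → ⟪P z - Q z, m⟫ = 0 := by
    intro z m hm
    rw [inner_sub_left, hPsa, hfixP m hm, hQsa, hfixQ m (h ▸ hm), sub_self]
  ext z
  have hQz : Q z ∈ Set.range ⇑P := h ▸ Set.mem_range_self z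
  obtain ⟨k, hk⟩ := hQz
  have hm : P z - Q z ∈ Set.range ⇑P := ⟨z - k, by rw [map_sub, hk]⟩
  have h0 := key z _ hm
  exact sub_eq_zero.1 (inner_self_eq_zero.1 h0)

end Lag

theorem graph_chart_of_lagrangian
    {H : Type*} [NormedAddCommGroup H] [InnerProductSpace ℝ H] [CompleteSpace H]
    (J : H →L[ℝ] H) (hJ2 : ∀ x : H, J (J x) = -x)
    (hJorth : ∀ x y : H, ⟪J x, J y⟫ = ⟪x, y⟫)
    (l : Submodule ℝ H) (hl : omegaAnn J (l : Set H) = (l : Set H)) :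
    (∀ A : ↥l →L[ℝ] ↥l, (∀ x y : ↥l, ⟪A x, y⟫ = ⟪x, A y⟫) →
        omegaAnn J (graphSet J l A) = graphSet J l A ∧
        ∀ z : H, ∃ u ∈ graphSet J l A, ∃ v ∈ (lᗮ : Set H), z = u + v) ∧
    (∀ A B : ↥l →L[ℝ] ↥l, (∀ x y : ↥l, ⟪A x, y⟫ = ⟪x, A y⟫) →
        (∀ x y : ↥l, ⟪B x, y⟫ = ⟪x, B y⟫) →
        graphSet J l A = graphSet J l B → A = B) ∧
    (∀ μ : Set H, omegaAnn J μ = μ →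
        (∀ z : H, ∃ u ∈ μ, ∃ v ∈ (lᗮ : Set H), z = u + v) →
        ∃ A : ↥l →L[ℝ] ↥l, (∀ x y : ↥l, ⟪A x, y⟫ = ⟪x, A y⟫) ∧ graphSet J l A = μ) ∧
    ∃ φ : {A : ↥l →L[ℝ] ↥l // ∀ x y : ↥l, ⟪A x, y⟫ = ⟪x, A y⟫} ≃ₜ
        {P : H →L[ℝ] H // (∀ x y : H, ⟪P x, y⟫ = ⟪x, P y⟫) ∧ P.comp P = P ∧
          omegaAnn J (Set.range ⇑P) = Set.range ⇑P ∧
          ∀ z : H, ∃ u ∈ Set.range ⇑P, ∃ v ∈ (lᗮ : Set H), z = u + v},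
      ∀ A, Set.range ⇑(φ A).1 = graphSet J l A.1 := by
  haveI : CompleteSpace ↥l := by
    have hcl : IsClosed (l : Set H) := by rw [← hl]; exact omegaAnn_isClosed J _
    exact hcl.completeSpace_coe
  have hrep : ∀ P : H →L[ℝ] H, (∀ x y : H, ⟪P x, y⟫ = ⟪x, P y⟫) → P.comp P = P →
      omegaAnn J (Set.range ⇑P) = Set.range ⇑P →
      (∀ z : H, ∃ u ∈ Set.range ⇑P, ∃ v ∈ (lᗮ : Set H), z = u + v) →
      ∃ A : ↥l →L[ℝ] ↥l, (∀ x y : ↥l, ⟪A x, y⟫ = ⟪x, A y⟫) ∧ P = lagProj J l A := by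
    intro P h1 h2 h3 h4
    obtain ⟨A, hA, hgr⟩ := graph_surj hJ2 hJorth hl _ h3 h4
    exact ⟨A, hA, proj_unique h1 (lagProj_sa hJ2 hJorth hl hA) h2 (lagProj_idem hJ2 hl hA)
      (by rw [lagProj_range hJ2 hl hA, hgr])⟩
  refine ⟨fun A hA => ⟨graph_lagrangian hJ2 hJorth hl hA, graph_transversal hJ2 hl A⟩,
    fun A B _ _ h => graph_inj hJ2 hl h,
    fun μ hμ htr => graph_surj hJ2 hJorth hl μ hμ htr, ?_⟩
  refine ⟨Homeomorph.mk (Equiv.mk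
      (fun A => ⟨lagProj J l A.1, lagProj_sa hJ2 hJorth hl A.2,
        lagProj_idem hJ2 hl A.2,
        (by rw [lagProj_range hJ2 hl A.2]; exact graph_lagrangian hJ2 hJorth hl A.2),
        (by rw [lagProj_range hJ2 hl A.2]; exact graph_transversal hJ2 hl A.1)⟩)
      (fun P => ⟨lagPsi J l P.1, by
        obtain ⟨A, hA, hPA⟩ := hrep P.1 P.2.1 P.2.2.1 P.2.2.2.1 P.2.2.2.2
        rw [hPA, lag_psi_phi hJ2 hl hA]
        exact hA⟩)
      (fun A => Subtype.ext (lag_psi_phi hJ2 hl A.2))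
      (fun P => by
        obtain ⟨A, hA, hPA⟩ := hrep P.1 P.2.1 P.2.2.1 P.2.2.2.1 P.2.2.2.2
        apply Subtype.ext
        show lagProj J l (lagPsi J l P.1) = P.1
        rw [hPA, lag_psi_phi hJ2 hl hA]))
    ?_ ?_, fun A => lagProj_range hJ2 hl A.2⟩
  · apply Continuous.subtype_mk
    rw [continuous_iff_continuousAt]
    intro A₀
    have hinv : ContinuousAt (fun B : ↥l →L[ℝ] ↥l => Ring.inverse (1 + B * B)) A₀.1 := by
      have h1 : ContinuousAt Ring.inverse ((1 + A₀.1 * A₀.1 : ↥l →L[ℝ] ↥l)) := by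
        have h2 := NormedRing.inverse_continuousAt (lag_isUnit A₀.1 A₀.2).unit
        rwa [IsUnit.unit_spec] at h2
      have hg : Continuous (fun B : ↥l →L[ℝ] ↥l => 1 + B * B) := by
        have h3 : Continuous (fun B : ↥l →L[ℝ] ↥l => (1 : ↥l →L[ℝ] ↥l) + B.comp B) :=
          continuous_const.add (continuous_id.clm_comp continuous_id)
        exact h3
      exact ContinuousAt.comp (f := fun B : ↥l →L[ℝ] ↥l => 1 + B * B) h1 hg.continuousAt
    have hc : ContinuousAt (fun B : ↥l →L[ℝ] ↥l =>
        ((lagGamma J l B).comp (Ring.inverse (1 + B * B))).comp (lagRho J l B)) A₀.1 := by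
      apply ContinuousAt.clm_comp'
      · apply ContinuousAt.clm_comp'
        · exact ((continuous_const.add
            (continuous_const.clm_comp continuous_id)).continuousAt)
        · exact hinv
      · exact ((continuous_const.add
          (continuous_id.clm_comp continuous_const)).continuousAt)
    have hc' : ContinuousAt (fun B : ↥l →L[ℝ] ↥l => lagProj J l B) A₀.1 := hc
    exact hc'.comp continuous_subtype_val.continuousAt
  · apply Continuous.subtype_mk
    rw [continuous_iff_continuousAt]
    intro P₀
    obtain ⟨A₀, hA₀, hP₀⟩ := hrep P₀.1 P₀.2.1 P₀.2.2.1 P₀.2.2.2.1 P₀.2.2.2.2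
    have hDunit : IsUnit ((lagPi1 l).comp (P₀.1.comp l.subtypeL)) := by
      rw [hP₀, (lag_DE hJ2 hl hA₀).1]
      rw [← IsUnit.unit_spec (lag_isUnit A₀ hA₀), Ring.inverse_unit]
      exact Units.isUnit _
    have hinv : ContinuousAt (fun B : H →L[ℝ] H =>
        Ring.inverse ((lagPi1 l).comp (B.comp l.subtypeL))) P₀.1 := by
      have h1 : ContinuousAt Ring.inverse ((lagPi1 l).comp (P₀.1.comp l.subtypeL)) := by
        have h2 := NormedRing.inverse_continuousAt (R := ↥l →L[ℝ] ↥l) hDunit.unit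
        rwa [IsUnit.unit_spec] at h2
      have hg : Continuous (fun B : H →L[ℝ] H => (lagPi1 l).comp (B.comp l.subtypeL)) :=
        continuous_const.clm_comp (continuous_id.clm_comp continuous_const)
      exact ContinuousAt.comp
        (f := fun B : H →L[ℝ] H => (lagPi1 l).comp (B.comp l.subtypeL)) h1 hg.continuousAt
    have hc : ContinuousAt (fun B : H →L[ℝ] H =>
        ((lagPi2 J l).comp (B.comp l.subtypeL)).comp
          (Ring.inverse ((lagPi1 l).comp (B.comp l.subtypeL)))) P₀.1 := by
      apply ContinuousAt.clm_comp'
      · exact (continuous_const.clm_comp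
          (continuous_id.clm_comp continuous_const)).continuousAt
      · exact hinv
    have hc' : ContinuousAt (fun B : H →L[ℝ] H => lagPsi J l B) P₀.1 := hc
    exact hc'.comp continuous_subtype_val.continuousAt
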